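/- Let s, t ∈ ℕᵃ with sᵢ ≤ tᵢ for all i, let N = |S(s,t)|, and identify each shuffle on S(s,t) with the unique order-isomorphism f : ({1,…,N}, ≤) → (S(s,t), ⪯). For a shuffle f and 1 ≤ p ≤ N−1, define f · β_p := f ∘ s_p if π₁(f(p)) > π₁(f(p+1)) (where s_p ∈ S_N swaps p and p+1 and π₁(i|k) = i), and f · β_p := ∗ otherwise, where ∗ is an added basepoint with ∗ · β_p = ∗. Then: (a) whenever π₁(f(p)) > π₁(f(p+1)), the composite f ∘ s_p is again (the order-isomorphism of) a shuffle on S(s,t); (b) this assignment, together with 0 acting as the constant map at ∗, extends to a right action of the braid monoid with zero 𝔹_N on the set of shuffles on S(s,t) together with ∗; and (c) for every non-zero x ∈ 𝔹_N and every shuffle f, either f · x = f ∘ σ_x or f · x = ∗, where σ : 𝔹_N ∖ {0} → S_N is the function with σ_{β_p} = s_p and σ_{xy} = σ_x ∘ σ_y. -/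

import Mathlib

/-!
The braid monoid with zero `𝔹ₙ`, realized as the quotient of the free monoid on
letters `β₁, …, β_{n−1}, z` by the congruence generated by the braid relations,
`β_p β_p = 0`, `β_p z = z = z β_p` and `z z = z`, with `0 := z`.

Statement 0: every non-zero element `x ∈ 𝔹ₙ` can be written as
`x = β_{1,q₁} ⋯ β_{n−1, q_{n−1}}` with `1 ≤ q_p ≤ p + 1`, and the tuple
`(q₁, …, q_{n−1})` satisfying these bounds is uniquely determined by `x`.
-/

namespace BraidMonoidZero

/-- Letters: `some i` is the generator `β_{i+1}` (for `i : Fin (n-1)`), `none` is `z`. -/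
abbrev Letter (n : ℕ) := Option (Fin (n - 1))

/-- The defining relations of the braid monoid with zero. -/
inductive Rel (n : ℕ) : FreeMonoid (Letter n) → FreeMonoid (Letter n) → Prop
  | comm (i j : Fin (n - 1)) (h : i.val + 1 < j.val) :
      Rel n (FreeMonoid.of (some j) * FreeMonoid.of (some i))
            (FreeMonoid.of (some i) * FreeMonoid.of (some j))
  | braid (i j : Fin (n - 1)) (h : j.val = i.val + 1) :
      Rel n (FreeMonoid.of (some j) * FreeMonoid.of (some i) * FreeMonoid.of (some j))
            (FreeMonoid.of (some i) * FreeMonoid.of (some j) * FreeMonoid.of (some i))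
  | square (i : Fin (n - 1)) :
      Rel n (FreeMonoid.of (some i) * FreeMonoid.of (some i)) (FreeMonoid.of none)
  | zright (i : Fin (n - 1)) :
      Rel n (FreeMonoid.of (some i) * FreeMonoid.of none) (FreeMonoid.of none)
  | zleft (i : Fin (n - 1)) :
      Rel n (FreeMonoid.of none * FreeMonoid.of (some i)) (FreeMonoid.of none)
  | zz : Rel n (FreeMonoid.of none * FreeMonoid.of none) (FreeMonoid.of none)

/-- The congruence generated by the defining relations. -/
def bmzCon (n : ℕ) : Con (FreeMonoid (Letter n)) := conGen (Rel n)

/-- The braid monoid with zero `𝔹ₙ`. -/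
abbrev BMZ (n : ℕ) := (bmzCon n).Quotient

/-- The zero element `0 = z` of `𝔹ₙ`. -/
def zero (n : ℕ) : BMZ n := (bmzCon n).mk' (FreeMonoid.of none)

/-- The generator `β_{i+1}` of `𝔹ₙ` (so subscripts range over `1, …, n-1`). -/
def gen (n : ℕ) (i : Fin (n - 1)) : BMZ n := (bmzCon n).mk' (FreeMonoid.of (some i))

/-- The generator `β_r`, indexed by its 1-based subscript `r ∈ {1, …, n-1}`. -/
def genNat (n r : ℕ) : BMZ n := if h : r - 1 < n - 1 then gen n ⟨r - 1, h⟩ else 1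

/-- `betaSeg n p q` is `β_{p,q} = β_p β_{p-1} ⋯ β_q` (the identity when `q = p + 1`). -/
def betaSeg (n p q : ℕ) : BMZ n :=
  ((List.range' q (p + 1 - q)).reverse.map (genNat n)).prod

/-- The product `β_{1,q₁} · β_{2,q₂} · ⋯ · β_{n−1,q_{n−1}}`, where the value `q i`
corresponds to `q_{i+1}` for `i : Fin (n-1)`. -/
def normalProd (n : ℕ) (q : Fin (n - 1) → ℕ) : BMZ n :=
  ((List.finRange (n - 1)).map (fun i => betaSeg n (i.val + 1) (q i))).prod

/-- The transposition `(p, p+1)` of `{1, …, n}` associated to the generator `β_p`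
(`i : Fin (n-1)` corresponds to `p = i + 1`; in `Fin n` it swaps positions `i` and `i+1`). -/
def swapAt (n : ℕ) (i : Fin (n - 1)) : Equiv.Perm (Fin n) :=
  Equiv.swap ⟨i.val, lt_of_lt_of_le i.isLt (Nat.sub_le n 1)⟩
    ⟨i.val + 1, by have h := i.isLt; omega⟩

/-- The monoid homomorphism `σ̃` from the free monoid on `β₁, …, β_{n−1}` to `Sₙ`
sending `β_p` to the transposition `(p, p+1)`.  Note that multiplication of
permutations is composition, so `σ̃(xy) = σ̃(x) ∘ σ̃(y)`. -/
def permHom (n : ℕ) : FreeMonoid (Fin (n - 1)) →* Equiv.Perm (Fin n) :=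
  FreeMonoid.lift (fun i => swapAt n i)

/-- The canonical monoid homomorphism from the free monoid on `β₁, …, β_{n−1}` to `𝔹ₙ`. -/
def toBMZ (n : ℕ) : FreeMonoid (Fin (n - 1)) →* BMZ n :=
  FreeMonoid.lift (fun i => gen n i)


/-! ### Shuffles, identified with their enumerating order-isomorphisms -/

/-- The set `S(s,t)`: pairs `(i|k)` with `sᵢ < k ≤ tᵢ`. -/
def Idx (a : ℕ) (s t : Fin a → ℕ) : Type :=
  {p : Fin a × ℕ // s p.1 < p.2 ∧ p.2 ≤ t p.1}

/-- A shuffle on `S(s,t)`, identified with the unique order-isomorphism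
`f : ({1,…,N}, ≤) → (S(s,t), ⪯)`: a bijection `Fin N → S(s,t)` which is increasing in
the second coordinate on elements with the same first coordinate. -/
def ShuffleEnum (a : ℕ) (s t : Fin a → ℕ) (N : ℕ) : Type :=
  {f : Fin N → Idx a s t // Function.Bijective f ∧
    ∀ p q : Fin N, (f p).1.1 = (f q).1.1 → p ≤ q → (f p).1.2 ≤ (f q).1.2}

/-- The position `p` (as an element of `Fin N`) for `p : Fin (N-1)`. -/
def lo (N : ℕ) (j : Fin (N - 1)) : Fin N := ⟨j.val, by have h := j.isLt; omega⟩

/-- The position `p + 1` (as an element of `Fin N`) for `p : Fin (N-1)`. -/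
def hi (N : ℕ) (j : Fin (N - 1)) : Fin N := ⟨j.val + 1, by have h := j.isLt; omega⟩

/-- The condition `π₁(f(p)) > π₁(f(p+1))` under which `f · β_p = f ∘ s_p`. -/
def Descends {a : ℕ} {s t : Fin a → ℕ} {N : ℕ} (f : ShuffleEnum a s t N)
    (j : Fin (N - 1)) : Prop :=
  (f.1 (hi N j)).1.1 < (f.1 (lo N j)).1.1


/-! ### Auxiliary development for statement7 -/

section Aux

variable {a : ℕ} {s t : Fin a → ℕ} {N : ℕ}

lemma swapAt_val (N : ℕ) (j : Fin (N - 1)) (p : Fin N) :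
    (swapAt N j p).val = if p.val = j.val then j.val + 1
      else if p.val = j.val + 1 then j.val else p.val := by
  simp only [swapAt, Equiv.swap_apply_def, Fin.ext_iff]
  split_ifs <;> simp_all

lemma swapAt_fixed (j : Fin (N - 1)) (p : Fin N)
    (h1 : p.val ≠ j.val) (h2 : p.val ≠ j.val + 1) : swapAt N j p = p := by
  apply Fin.ext
  rw [swapAt_val, if_neg h1, if_neg h2]

lemma swapAt_lo (j : Fin (N - 1)) : swapAt N j (lo N j) = hi N j := by
  apply Fin.ext
  rw [swapAt_val]
  simp [lo, hi]

lemma swapAt_hi (j : Fin (N - 1)) : swapAt N j (hi N j) = lo N j := by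
  apply Fin.ext
  rw [swapAt_val]
  simp [lo, hi]

/-- Part (a): swapping two adjacent positions with distinct first coordinates
gives again a shuffle. -/
def swapShuffle (f : ShuffleEnum a s t N) (j : Fin (N - 1))
    (h : (f.1 (lo N j)).1.1 ≠ (f.1 (hi N j)).1.1) : ShuffleEnum a s t N :=
  ⟨fun p => f.1 (swapAt N j p), f.2.1.comp (swapAt N j).bijective, by
    intro p q h1 h2
    by_cases hpq : swapAt N j p ≤ swapAt N j q
    · exact f.2.2 _ _ h1 hpq
    · exfalso
      have hgt : (swapAt N j q).val < (swapAt N j p).val := Fin.lt_def.mp (not_le.mp hpq)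
      have hv := swapAt_val N j p
      have hv' := swapAt_val N j q
      have hple : p.val ≤ q.val := h2
      have hpj : p.val = j.val ∧ q.val = j.val + 1 := by
        split_ifs at hv hv' <;> omega
      have e1 : swapAt N j p = hi N j := by
        apply Fin.ext; rw [hv]; simp only [hi]; split_ifs <;> omega
      have e2 : swapAt N j q = lo N j := by
        apply Fin.ext; rw [hv']; simp only [lo]; split_ifs <;> omega
      have h1' : (f.1 (swapAt N j p)).1.1 = (f.1 (swapAt N j q)).1.1 := h1
      rw [e1, e2] at h1'
      exact h h1'.symm⟩

@[simp] lemma swapShuffle_fst (f : ShuffleEnum a s t N) (j : Fin (N - 1)) (h) :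
    (swapShuffle f j h).1 = fun p => f.1 (swapAt N j p) := rfl

instance (f : ShuffleEnum a s t N) (j : Fin (N - 1)) : Decidable (Descends f j) :=
  inferInstanceAs (Decidable (_ < _))

/-- The action of a single letter. -/
def step : Option (ShuffleEnum a s t N) → Letter N → Option (ShuffleEnum a s t N)
  | none, _ => none
  | some _, none => none
  | some f, some j =>
      if h : Descends f j then some (swapShuffle f j (ne_of_gt h)) else none

@[simp] lemma step_none (x : Letter N) :
    step (none : Option (ShuffleEnum a s t N)) x = none := rfl

@[simp] lemma step_z (f : ShuffleEnum a s t N) : step (some f) none = none := rfl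

lemma step_pos {f : ShuffleEnum a s t N} {j : Fin (N - 1)} (h : Descends f j) :
    step (some f) (some j) = some (swapShuffle f j (ne_of_gt h)) := dif_pos h

lemma step_neg {f : ShuffleEnum a s t N} {j : Fin (N - 1)} (h : ¬ Descends f j) :
    step (some f) (some j) = none := dif_neg h

end Aux

section Aux2

variable {a : ℕ} {s t : Fin a → ℕ} {N : ℕ}

lemma swapAt_comm_pt {i j : Fin (N - 1)} (h : i.val + 1 < j.val) (p : Fin N) :
    swapAt N j (swapAt N i p) = swapAt N i (swapAt N j p) := by
  apply Fin.ext
  simp only [swapAt_val]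
  split_ifs <;> omega

set_option maxHeartbeats 2000000 in
lemma swapAt_braid_pt {i j : Fin (N - 1)} (h : j.val = i.val + 1) (p : Fin N) :
    swapAt N j (swapAt N i (swapAt N j p)) = swapAt N i (swapAt N j (swapAt N i p)) := by
  apply Fin.ext
  simp only [swapAt_val]
  split_ifs <;> omega

lemma square_step (i : Fin (N - 1)) (f : ShuffleEnum a s t N) :
    step (step (some f) (some i)) (some i) = none := by
  by_cases hD : Descends f i
  · rw [step_pos hD]
    apply step_neg
    intro hD'
    have : (f.1 (swapAt N i (hi N i))).1.1 < (f.1 (swapAt N i (lo N i))).1.1 := hD'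
    rw [swapAt_hi, swapAt_lo] at this
    exact Nat.lt_asymm hD this
  · rw [step_neg hD]
    rfl

lemma comm_step {i j : Fin (N - 1)} (hij : i.val + 1 < j.val) (f : ShuffleEnum a s t N) :
    step (step (some f) (some j)) (some i) = step (step (some f) (some i)) (some j) := by
  have hN3 : j.val + 1 < N := by have := j.isLt; omega
  have Ea : swapAt N j (lo N i) = lo N i := swapAt_fixed j _ (by simp [lo]; omega) (by simp [lo]; omega)
  have Eb : swapAt N j (hi N i) = hi N i := swapAt_fixed j _ (by simp [hi]; omega) (by simp [hi]; omega)
  have Ec : swapAt N i (lo N j) = lo N j := swapAt_fixed i _ (by simp [lo]; omega) (by simp [lo]; omega)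
  have Ed : swapAt N i (hi N j) = hi N j := swapAt_fixed i _ (by simp [hi]; omega) (by simp [hi]; omega)
  have L2 : ∀ hne, Descends (swapShuffle f j hne) i ↔ Descends f i := by
    intro hne
    show (f.1 (swapAt N j (hi N i))).1.1 < (f.1 (swapAt N j (lo N i))).1.1 ↔ _
    rw [Ea, Eb]
    exact Iff.rfl
  have R2 : ∀ hne, Descends (swapShuffle f i hne) j ↔ Descends f j := by
    intro hne
    show (f.1 (swapAt N i (hi N j))).1.1 < (f.1 (swapAt N i (lo N j))).1.1 ↔ _
    rw [Ec, Ed]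
    exact Iff.rfl
  by_cases hDj : Descends f j
  · by_cases hDi : Descends f i
    · rw [step_pos hDj, step_pos ((L2 _).mpr hDi), step_pos hDi, step_pos ((R2 _).mpr hDj)]
      congr 1
      apply Subtype.ext
      funext p
      show f.1 (swapAt N j (swapAt N i p)) = f.1 (swapAt N i (swapAt N j p))
      exact congrArg f.1 (swapAt_comm_pt hij p)
    · rw [step_pos hDj, step_neg (fun hD => hDi ((L2 _).mp hD)), step_neg hDi]
      rfl
  · by_cases hDi : Descends f i
    · rw [step_neg hDj, step_pos hDi, step_neg (fun hD => hDj ((R2 _).mp hD))]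
      rfl
    · rw [step_neg hDj, step_neg hDi]
      rfl

lemma braid_step {i j : Fin (N - 1)} (hij : j.val = i.val + 1) (f : ShuffleEnum a s t N) :
    step (step (step (some f) (some j)) (some i)) (some j)
      = step (step (step (some f) (some i)) (some j)) (some i) := by
  have E0 : lo N j = hi N i := by apply Fin.ext; simp [lo, hi, hij]
  have Eji_lo : swapAt N j (lo N i) = lo N i :=
    swapAt_fixed j _ (by simp [lo]; omega) (by simp [lo]; omega)
  have Eji_hi : swapAt N j (hi N i) = hi N j := by
    apply Fin.ext; rw [swapAt_val]; simp [lo, hi, hij]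
  have Eij_loj : swapAt N i (lo N j) = lo N i := by
    apply Fin.ext; rw [swapAt_val]; simp [lo, hi, hij]
  have Eij_hij : swapAt N i (hi N j) = hi N j :=
    swapAt_fixed i _ (by simp [hi]; omega) (by simp [hi]; omega)
  have L1 : Descends f j ↔ (f.1 (hi N j)).1.1 < (f.1 (hi N i)).1.1 := by
    unfold Descends; rw [E0]
  have L2 : ∀ hne, Descends (swapShuffle f j hne) i ↔
      (f.1 (hi N j)).1.1 < (f.1 (lo N i)).1.1 := by
    intro hne
    show (f.1 (swapAt N j (hi N i))).1.1 < (f.1 (swapAt N j (lo N i))).1.1 ↔ _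
    rw [Eji_lo, Eji_hi]
  have L3 : ∀ hne hne', Descends (swapShuffle (swapShuffle f j hne) i hne') j ↔
      (f.1 (hi N i)).1.1 < (f.1 (lo N i)).1.1 := by
    intro hne hne'
    show (f.1 (swapAt N j (swapAt N i (hi N j)))).1.1
        < (f.1 (swapAt N j (swapAt N i (lo N j)))).1.1 ↔ _
    rw [Eij_hij, Eij_loj, swapAt_hi, Eji_lo, E0]
  have R1 : Descends f i ↔ (f.1 (hi N i)).1.1 < (f.1 (lo N i)).1.1 := Iff.rfl
  have R2 : ∀ hne, Descends (swapShuffle f i hne) j ↔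
      (f.1 (hi N j)).1.1 < (f.1 (lo N i)).1.1 := by
    intro hne
    show (f.1 (swapAt N i (hi N j))).1.1 < (f.1 (swapAt N i (lo N j))).1.1 ↔ _
    rw [Eij_hij, Eij_loj]
  have R3 : ∀ hne hne', Descends (swapShuffle (swapShuffle f i hne) j hne') i ↔
      (f.1 (hi N j)).1.1 < (f.1 (hi N i)).1.1 := by
    intro hne hne'
    show (f.1 (swapAt N i (swapAt N j (hi N i)))).1.1
        < (f.1 (swapAt N i (swapAt N j (lo N i)))).1.1 ↔ _
    rw [Eji_hi, Eji_lo, Eij_hij, swapAt_lo]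
  by_cases hCB : (f.1 (hi N j)).1.1 < (f.1 (hi N i)).1.1
  · by_cases hCA : (f.1 (hi N j)).1.1 < (f.1 (lo N i)).1.1
    · by_cases hBA : (f.1 (hi N i)).1.1 < (f.1 (lo N i)).1.1
      · rw [step_pos (L1.mpr hCB), step_pos ((L2 _).mpr hCA), step_pos ((L3 _ _).mpr hBA),
            step_pos (R1.mpr hBA), step_pos ((R2 _).mpr hCA), step_pos ((R3 _ _).mpr hCB)]
        congr 1
        apply Subtype.ext
        funext p
        show f.1 (swapAt N j (swapAt N i (swapAt N j p)))
            = f.1 (swapAt N i (swapAt N j (swapAt N i p)))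
        exact congrArg f.1 (swapAt_braid_pt hij p)
      · rw [step_pos (L1.mpr hCB), step_pos ((L2 _).mpr hCA),
            step_neg (fun hD => hBA ((L3 _ _).mp hD)),
            step_neg (fun hD => hBA (R1.mp hD))]
        rfl
    · rw [step_pos (L1.mpr hCB), step_neg (fun hD => hCA ((L2 _).mp hD))]
      by_cases hBA : (f.1 (hi N i)).1.1 < (f.1 (lo N i)).1.1
      · rw [step_pos (R1.mpr hBA), step_neg (fun hD => hCA ((R2 _).mp hD))]
        rfl
      · rw [step_neg (fun hD => hBA (R1.mp hD))]
        rfl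
  · by_cases hBA : (f.1 (hi N i)).1.1 < (f.1 (lo N i)).1.1
    · rw [step_neg (fun hD => hCB (L1.mp hD)), step_pos (R1.mpr hBA)]
      by_cases hCA : (f.1 (hi N j)).1.1 < (f.1 (lo N i)).1.1
      · rw [step_pos ((R2 _).mpr hCA), step_neg (fun hD => hCB ((R3 _ _).mp hD))]
        rfl
      · rw [step_neg (fun hD => hCA ((R2 _).mp hD))]
        rfl
    · rw [step_neg (fun hD => hCB (L1.mp hD)), step_neg (fun hD => hBA (R1.mp hD))]
      rfl

end Aux2

section Aux3

variable {a : ℕ} {s t : Fin a → ℕ} {N : ℕ}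

/-- The action of a word. -/
def wordAct (o : Option (ShuffleEnum a s t N)) (w : FreeMonoid (Letter N)) :
    Option (ShuffleEnum a s t N) :=
  w.toList.foldl step o

lemma wordAct_none (w : FreeMonoid (Letter N)) :
    wordAct (none : Option (ShuffleEnum a s t N)) w = none := by
  show w.toList.foldl step none = none
  induction w.toList with
  | nil => rfl
  | cons x l ih => exact ih

lemma wordAct_mul (o : Option (ShuffleEnum a s t N)) (u v : FreeMonoid (Letter N)) :
    wordAct o (u * v) = wordAct (wordAct o u) v := by
  simp [wordAct, FreeMonoid.toList_mul, List.foldl_append]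

lemma rel_sound {u v : FreeMonoid (Letter N)} (h : Rel N u v)
    (o : Option (ShuffleEnum a s t N)) : wordAct o u = wordAct o v := by
  cases o with
  | none => rw [wordAct_none, wordAct_none]
  | some f =>
    cases h with
    | comm i j hij =>
      simpa [wordAct, FreeMonoid.toList_mul, FreeMonoid.toList_of] using comm_step hij f
    | braid i j hij =>
      simpa [wordAct, FreeMonoid.toList_mul, FreeMonoid.toList_of] using braid_step hij f
    | square i =>
      simpa [wordAct, FreeMonoid.toList_mul, FreeMonoid.toList_of] using square_step i f
    | zright i =>
      have e : wordAct (some f) (FreeMonoid.of (some i) * FreeMonoid.of (none : Letter N))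
          = step (step (some f) (some i)) none := by
        simp [wordAct, FreeMonoid.toList_mul, FreeMonoid.toList_of]
      rw [e]
      cases step (some f) (some i) <;> rfl
    | zleft i => rfl
    | zz => rfl

/-- The congruence of words acting equally. -/
def actCon (a : ℕ) (s t : Fin a → ℕ) (N : ℕ) : Con (FreeMonoid (Letter N)) where
  r u v := ∀ o : Option (ShuffleEnum a s t N), wordAct o u = wordAct o v
  iseqv := ⟨fun _ _ => rfl, fun h o => (h o).symm, fun h1 h2 o => (h1 o).trans (h2 o)⟩
  mul' := fun h1 h2 o => by rw [wordAct_mul, wordAct_mul, h1, h2]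

lemma bmz_sound {u v : FreeMonoid (Letter N)} (h : bmzCon N u v)
    (o : Option (ShuffleEnum a s t N)) : wordAct o u = wordAct o v :=
  (Con.conGen_le (c := actCon a s t N)).mpr (fun _ _ hr => rel_sound hr) h o

/-- The action of `𝔹_N`. -/
def act (o : Option (ShuffleEnum a s t N)) (x : BMZ N) : Option (ShuffleEnum a s t N) :=
  Con.liftOn x (wordAct o) fun _ _ h => bmz_sound h o

lemma act_coe (o : Option (ShuffleEnum a s t N)) (u : FreeMonoid (Letter N)) :
    act o ((u : FreeMonoid (Letter N)) : BMZ N) = wordAct o u := rfl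

lemma act_one (o : Option (ShuffleEnum a s t N)) : act o 1 = o := rfl

lemma act_mul (o : Option (ShuffleEnum a s t N)) (x y : BMZ N) :
    act o (x * y) = act (act o x) y := by
  induction x using Con.induction_on with
  | H u =>
    induction y using Con.induction_on with
    | H v =>
      show act o ((u * v : FreeMonoid (Letter N)) : BMZ N) = _
      rw [act_coe, wordAct_mul]
      rfl

lemma act_zero (o : Option (ShuffleEnum a s t N)) : act o (zero N) = none := by
  show wordAct o (FreeMonoid.of none) = none
  cases o <;> rfl

lemma act_none' (x : BMZ N) : act (none : Option (ShuffleEnum a s t N)) x = none := by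
  induction x using Con.induction_on with
  | H u => exact wordAct_none u

lemma act_gen (f : ShuffleEnum a s t N) (j : Fin (N - 1)) :
    act (some f) (gen N j) = step (some f) (some j) := rfl

end Aux3

section Aux4

variable {a : ℕ} {s t : Fin a → ℕ} {N : ℕ}

lemma part_c (u : FreeMonoid (Fin (N - 1))) (f : ShuffleEnum a s t N) :
    act (some f) (toBMZ N u) = none ∨
      ∃ g : ShuffleEnum a s t N,
        act (some f) (toBMZ N u) = some g ∧ g.1 = fun p => f.1 (permHom N u p) := by
  induction u using FreeMonoid.recOn generalizing f with
  | one =>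
    right
    refine ⟨f, by rw [map_one, act_one], ?_⟩
    funext p
    rw [map_one]
    rfl
  | of_mul x xs ih =>
    rw [map_mul, act_mul]
    have hx : toBMZ N (FreeMonoid.of x) = gen N x := FreeMonoid.lift_eval_of _ _
    rw [hx, act_gen]
    by_cases hD : Descends f x
    · rw [step_pos hD]
      rcases ih (swapShuffle f x (ne_of_gt hD)) with h | ⟨g, hg1, hg2⟩
      · left; exact h
      · right
        refine ⟨g, hg1, ?_⟩
        rw [hg2]
        funext p
        rw [map_mul]
        show f.1 (swapAt N x ((permHom N xs) p)) = f.1 ((permHom N (FreeMonoid.of x) * permHom N xs) p)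
        rw [Equiv.Perm.mul_apply]
        congr 1
    · rw [step_neg hD]
      left
      exact act_none' _
end Aux4
/-- Let `N = |S(s,t)|` and identify shuffles on `S(s,t)` with
order-isomorphisms `f : ({1,…,N}, ≤) → (S(s,t), ⪯)`.  For a shuffle `f` and
`1 ≤ p ≤ N−1` define `f · β_p := f ∘ s_p` if `π₁(f(p)) > π₁(f(p+1))` and
`f · β_p := ∗` otherwise, where `∗` is an added basepoint (here `none`) fixed by all
the `β_p`.  Then:
(a) whenever `π₁(f(p)) > π₁(f(p+1))`, the composite `f ∘ s_p` is again (the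
    order-isomorphism of) a shuffle on `S(s,t)`;
(b) this assignment, together with `0` acting as the constant map at `∗`, extends to a
    right action of the braid monoid with zero `𝔹_N` on the set of shuffles together
    with `∗`; and
(c) for every non-zero `x ∈ 𝔹_N` and every shuffle `f`, either `f · x = f ∘ σ_x` or
    `f · x = ∗`, where `σ : 𝔹_N ∖ {0} → S_N` is the function with `σ_{β_p} = s_p` and
    `σ_{xy} = σ_x ∘ σ_y` (so `σ_x = σ̃(u)` for any word `u` representing `x`). -/
theorem statement7 (a : ℕ) (ha : 1 ≤ a) (s t : Fin a → ℕ) (hst : ∀ i, s i ≤ t i)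
    (N : ℕ) (hN : Nonempty (Fin N ≃ Idx a s t)) :
    (∀ (f : ShuffleEnum a s t N) (j : Fin (N - 1)), Descends f j →
        ∃ g : ShuffleEnum a s t N, g.1 = fun p => f.1 (swapAt N j p)) ∧
    ∃ act : Option (ShuffleEnum a s t N) → BMZ N → Option (ShuffleEnum a s t N),
      (∀ o, act o 1 = o) ∧
      (∀ o x y, act o (x * y) = act (act o x) y) ∧
      (∀ o, act o (zero N) = none) ∧
      (∀ x, act none x = none) ∧
      (∀ (f : ShuffleEnum a s t N) (j : Fin (N - 1)),
        (Descends f j →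
          ∃ g : ShuffleEnum a s t N,
            act (some f) (gen N j) = some g ∧ g.1 = fun p => f.1 (swapAt N j p)) ∧
        (¬ Descends f j → act (some f) (gen N j) = none)) ∧
      (∀ u : FreeMonoid (Fin (N - 1)), toBMZ N u ≠ zero N →
        ∀ f : ShuffleEnum a s t N,
          act (some f) (toBMZ N u) = none ∨
          ∃ g : ShuffleEnum a s t N,
            act (some f) (toBMZ N u) = some g ∧ g.1 = fun p => f.1 (permHom N u p)) := by
  refine ⟨fun f j hD => ⟨swapShuffle f j (ne_of_gt hD), rfl⟩,
    act, act_one, act_mul, act_zero, act_none', ?_, fun u _ f => part_c u f⟩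
  intro f j
  constructor
  · intro hD
    exact ⟨swapShuffle f j (ne_of_gt hD), by rw [act_gen, step_pos hD], rfl⟩
  · intro hD
    rw [act_gen, step_neg hD]

end BraidMonoidZero
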